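/- Let S : [0,1] × {0,1} → ℝ be a proper scoring rule that is L-Lipschitz in its first argument, let m ≥ 1 be a natural number, and let q ∈ [0,1]. Then there exists a probability vector w ∈ Δ_{m+1} such that for every outcome y ∈ {0,1}, ∑_{i=0}^{m} w_i · (S(i/m, y) − S(q, y)) ≤ 2L/m². -/

import Mathlib

noncomputable def Sbar (S : ℝ → Fin 2 → ℝ) (x p : ℝ) : ℝ :=
  (1 - p) * S x 0 + p * S x 1

def ProperScoringRule (S : ℝ → Fin 2 → ℝ) : Prop :=
  ∀ p ∈ Set.Icc (0:ℝ) 1, ∀ x ∈ Set.Icc (0:ℝ) 1, Sbar S p p ≤ Sbar S x p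

def LipschitzScoringRule (S : ℝ → Fin 2 → ℝ) (L : ℝ) : Prop :=
  ∀ x ∈ Set.Icc (0:ℝ) 1, ∀ x' ∈ Set.Icc (0:ℝ) 1, ∀ y : Fin 2,
    |S x y - S x' y| ≤ L * |x - x'|


lemma key1_aux (x0 x1 A B u v : ℝ) (hx0 : 0 ≤ x0) (hx1 : 0 ≤ x1)
    (hA0 : 0 ≤ A) (hB0 : 0 ≤ B)
    (hP0 : x0 * u ≤ (1 - x0) * A) (hP1 : x1 * v ≤ (1 - x1) * (-B)) :
    x0 * x1 * (B * u + A * v) ≤ A * B * (x1 - x0) := by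
  nlinarith [mul_le_mul_of_nonneg_left hP0 (mul_nonneg hB0 hx1),
             mul_le_mul_of_nonneg_left hP1 (mul_nonneg hA0 hx0)]

lemma key2_aux (L a b A B : ℝ) (ha : 0 ≤ a) (hb : 0 ≤ b)
    (hA0 : 0 ≤ A) (hB0 : 0 ≤ B)
    (hA : A ≤ L * a) (hB : B ≤ L * b) :
    A * B * (a + b) ≤ L * a * b * (A + B) := by
  nlinarith [mul_le_mul_of_nonneg_right hA (mul_nonneg hB0 hb),
             mul_le_mul_of_nonneg_right hB (mul_nonneg hA0 ha)]

lemma core_ineq (L x0 x1 q f0 f1 fq g0 g1 gq : ℝ)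
    (hx00 : 0 ≤ x0) (hx01 : x0 < x1) (hx11 : x1 ≤ 1)
    (hq0 : x0 ≤ q) (hq1 : q ≤ x1)
    (h18 : 1/8 ≤ x0 * x1) (hL : 0 ≤ L)
    (habsA : |fq - f0| ≤ L * (q - x0))
    (habsB : |f1 - fq| ≤ L * (x1 - q))
    (hsgnA : 0 ≤ (q - x0) * (fq - f0))
    (hsgnB : 0 ≤ (x1 - q) * (f1 - fq))
    (hP0 : x0 * (g0 - gq) ≤ (1 - x0) * (fq - f0))
    (hP1 : x1 * (g1 - gq) ≤ (1 - x1) * (fq - f1)) :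
    ∃ lam : ℝ, 0 ≤ lam ∧ lam ≤ 1 ∧
      lam * (f0 - fq) + (1 - lam) * (f1 - fq) ≤ 8 * L * ((q - x0) * (x1 - q)) ∧
      lam * (g0 - gq) + (1 - lam) * (g1 - gq) ≤ 8 * L * ((q - x0) * (x1 - q)) := by
  have hx0pos : 0 < x0 := by nlinarith [mul_le_mul_of_nonneg_left hx11 hx00]
  have hx1pos : 0 < x1 := hx0pos.trans hx01
  have ha : 0 ≤ q - x0 := by linarith
  have hb : 0 ≤ x1 - q := by linarith
  have hA0 : 0 ≤ fq - f0 := by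
    rcases eq_or_lt_of_le ha with h | h
    · have h' : L * (q - x0) = 0 := by rw [← h]; ring
      have h1 := abs_nonneg (fq - f0)
      have h2 := neg_abs_le (fq - f0)
      linarith [habsA]
    · by_contra hneg
      push_neg at hneg
      nlinarith [mul_pos h (by linarith : (0:ℝ) < -(fq - f0))]
  have hB0 : 0 ≤ f1 - fq := by
    rcases eq_or_lt_of_le hb with h | h
    · have h' : L * (x1 - q) = 0 := by rw [← h]; ring
      have h1 := abs_nonneg (f1 - fq)
      have h2 := neg_abs_le (f1 - fq)
      linarith [habsB]
    · by_contra hneg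
      push_neg at hneg
      nlinarith [mul_pos h (by linarith : (0:ℝ) < -(f1 - fq))]
  have hALa : fq - f0 ≤ L * (q - x0) := le_trans (le_abs_self _) habsA
  have hBLb : f1 - fq ≤ L * (x1 - q) := le_trans (le_abs_self _) habsB
  have hRHS : 0 ≤ 8 * L * ((q - x0) * (x1 - q)) :=
    mul_nonneg (mul_nonneg (by norm_num) hL) (mul_nonneg ha hb)
  rcases le_or_gt (fq - f0 + (f1 - fq)) 0 with hs | hs
  · have hA : fq - f0 = 0 := by linarith
    refine ⟨1, zero_le_one, le_refl 1, by linarith, ?_⟩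
    rw [hA] at hP0
    have hg0 : g0 - gq ≤ 0 := by nlinarith [hP0]
    linarith
  · have hs3 : (0:ℝ) < f1 - f0 := by linarith
    have hne : f1 - f0 ≠ 0 := ne_of_gt hs3
    refine ⟨(f1 - fq) / (fq - f0 + (f1 - fq)), div_nonneg hB0 hs.le,
      (div_le_one hs).2 (by linarith), ?_, ?_⟩
    · have hEq : (f1 - fq) / (fq - f0 + (f1 - fq)) * (f0 - fq) +
          (1 - (f1 - fq) / (fq - f0 + (f1 - fq))) * (f1 - fq) = 0 := by
        field_simp
        ring
      rw [hEq]
      exact hRHS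
    · have h1lam : 1 - (f1 - fq) / (fq - f0 + (f1 - fq)) =
          (fq - f0) / (fq - f0 + (f1 - fq)) := by
        field_simp
        ring
      rw [h1lam, div_mul_eq_mul_div, div_mul_eq_mul_div, ← add_div,
        div_le_iff₀ hs]
      have key1 : x0 * x1 * ((f1 - fq) * (g0 - gq) + (fq - f0) * (g1 - gq)) ≤
          (fq - f0) * (f1 - fq) * (x1 - x0) := by
        have := key1_aux x0 x1 (fq - f0) (f1 - fq) (g0 - gq) (g1 - gq)
          hx00 hx1pos.le hA0 hB0 hP0 (by linarith : x1 * (g1 - gq) ≤ (1 - x1) * (-(f1 - fq)))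
        linarith only [this]
      have key2 : (fq - f0) * (f1 - fq) * (x1 - x0) ≤
          L * (q - x0) * (x1 - q) * (fq - f0 + (f1 - fq)) := by
        have h := key2_aux L (q - x0) (x1 - q) (fq - f0) (f1 - fq) ha hb hA0 hB0 hALa hBLb
        have he : (q - x0) + (x1 - q) = x1 - x0 := by ring
        rw [he] at h
        linarith only [h]
      have hX : 0 ≤ L * (q - x0) * (x1 - q) * (fq - f0 + (f1 - fq)) :=
        mul_nonneg (mul_nonneg (mul_nonneg hL ha) hb) (by linarith)
      have key3 : L * (q - x0) * (x1 - q) * (fq - f0 + (f1 - fq)) ≤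
          x0 * x1 * (8 * L * ((q - x0) * (x1 - q)) * (fq - f0 + (f1 - fq))) := by
        have h8 := mul_nonneg hX (by linarith : (0:ℝ) ≤ 8 * (x0 * x1) - 1)
        nlinarith [h8]
      have hx0x1 : 0 < x0 * x1 := mul_pos hx0pos hx1pos
      have hcomb : x0 * x1 * ((f1 - fq) * (g0 - gq) + (fq - f0) * (g1 - gq)) ≤
          x0 * x1 * (8 * L * ((q - x0) * (x1 - q)) * (fq - f0 + (f1 - fq))) := by
        linarith only [key1, key2, key3]
      have hfin := (mul_le_mul_iff_of_pos_left hx0x1).mp hcomb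
      linarith only [hfin]


lemma build_w (S : ℝ → Fin 2 → ℝ) (L q : ℝ) (m j : ℕ) (hm : 1 ≤ m) (hj : j + 1 ≤ m)
    (lam : ℝ) (h0 : 0 ≤ lam) (h1 : lam ≤ 1)
    (hy : ∀ y : Fin 2,
      lam * (S ((j : ℝ) / (m : ℝ)) y - S q y)
        + (1 - lam) * (S (((j : ℝ) + 1) / (m : ℝ)) y - S q y) ≤ 2 * L / (m : ℝ) ^ 2) :
    ∃ w : Fin (m+1) → ℝ, (∀ i, 0 ≤ w i) ∧ (∑ i, w i = 1) ∧
      ∀ y : Fin 2, ∑ i : Fin (m+1), w i * (S ((i : ℕ) / (m : ℝ)) y - S q y)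
        ≤ 2 * L / (m : ℝ) ^ 2 := by
  have hj0 : j < m + 1 := by omega
  have hj1 : j + 1 < m + 1 := by omega
  refine ⟨fun i => (if i = ⟨j, hj0⟩ then lam else 0) +
      (if i = ⟨j+1, hj1⟩ then 1 - lam else 0), ?_, ?_, ?_⟩
  · intro i
    dsimp only
    split_ifs <;> linarith
  · dsimp only
    rw [Finset.sum_add_distrib]
    rw [Finset.sum_ite_eq' Finset.univ (⟨j, hj0⟩ : Fin (m+1)) (fun _ => lam)]
    rw [Finset.sum_ite_eq' Finset.univ (⟨j+1, hj1⟩ : Fin (m+1)) (fun _ => 1 - lam)]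
    simp
  · intro y
    dsimp only
    have hsum : ∑ i : Fin (m+1),
        ((if i = (⟨j, hj0⟩ : Fin (m+1)) then lam else 0) +
         (if i = (⟨j+1, hj1⟩ : Fin (m+1)) then 1 - lam else 0)) *
          (S ((i : ℕ) / (m : ℝ)) y - S q y)
        = lam * (S ((j : ℝ) / (m : ℝ)) y - S q y)
          + (1 - lam) * (S (((j : ℝ) + 1) / (m : ℝ)) y - S q y) := by
      simp only [add_mul, ite_mul, zero_mul, Finset.sum_add_distrib,
        Finset.sum_ite_eq', Finset.mem_univ, if_true]
      push_cast
      ring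
    rw [hsum]
    exact hy y

set_option maxHeartbeats 2000000 in
theorem stmt0 (S : ℝ → Fin 2 → ℝ) (L : ℝ)
    (hproper : ProperScoringRule S) (hlip : LipschitzScoringRule S L)
    (m : ℕ) (hm : 1 ≤ m) (q : ℝ) (hq : q ∈ Set.Icc (0:ℝ) 1) :
    ∃ w : Fin (m+1) → ℝ, (∀ i, 0 ≤ w i) ∧ (∑ i, w i = 1) ∧
      ∀ y : Fin 2, ∑ i : Fin (m+1), w i * (S ((i : ℕ) / (m : ℝ)) y - S q y)
        ≤ 2 * L / m ^ 2 := by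
  have hm0 : (0:ℝ) < m := by exact_mod_cast hm
  obtain ⟨hq0, hq1⟩ := hq
  have hqmem : q ∈ Set.Icc (0:ℝ) 1 := ⟨hq0, hq1⟩
  have hL : 0 ≤ L := by
    have h := hlip 0 (by norm_num) 1 (by norm_num) 0
    have h2 : |(0:ℝ) - 1| = 1 := by norm_num
    rw [h2, mul_one] at h
    linarith [abs_nonneg (S 0 0 - S 1 0)]
  have prop : ∀ p ∈ Set.Icc (0:ℝ) 1, ∀ x ∈ Set.Icc (0:ℝ) 1,
      (1 - p) * S p 0 + p * S p 1 ≤ (1 - p) * S x 0 + p * S x 1 := by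
    intro p hp x hx
    simpa [Sbar] using hproper p hp x hx
  have mono0 : ∀ x ∈ Set.Icc (0:ℝ) 1, ∀ x' ∈ Set.Icc (0:ℝ) 1,
      0 ≤ (x' - x) * (S x' 0 - S x 0) := by
    intro x hx x' hx'
    have P1 := prop x hx x' hx'
    have P2 := prop x' hx' x hx
    nlinarith [mul_le_mul_of_nonneg_left P1 hx'.1, mul_le_mul_of_nonneg_left P2 hx.1]
  have mono1 : ∀ x ∈ Set.Icc (0:ℝ) 1, ∀ x' ∈ Set.Icc (0:ℝ) 1,
      0 ≤ (x' - x) * (S x 1 - S x' 1) := by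
    intro x hx x' hx'
    have P1 := prop x hx x' hx'
    have P2 := prop x' hx' x hx
    nlinarith [mul_le_mul_of_nonneg_left P1 (by linarith [hx'.2] : (0:ℝ) ≤ 1 - x'),
               mul_le_mul_of_nonneg_left P2 (by linarith [hx.2] : (0:ℝ) ≤ 1 - x)]
  -- grid cell
  set j : ℕ := min ⌊q * m⌋₊ (m - 1) with hjdef
  have hjm : j + 1 ≤ m := by
    have : j ≤ m - 1 := min_le_right _ _
    omega
  set x0 : ℝ := (j : ℝ) / m with hx0def
  set x1 : ℝ := ((j : ℝ) + 1) / m with hx1def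
  have hx0q : x0 ≤ q := by
    have h1 : (j:ℝ) ≤ q * m := by
      have hmin : (j:ℕ) ≤ ⌊q*m⌋₊ := min_le_left _ _
      have h2 : (⌊q*m⌋₊ : ℝ) ≤ q*m := Nat.floor_le (by positivity)
      calc (j:ℝ) ≤ (⌊q*m⌋₊:ℝ) := by exact_mod_cast hmin
        _ ≤ q*m := h2
    rw [hx0def, div_le_iff₀ hm0]
    linarith
  have hqx1 : q ≤ x1 := by
    rw [hx1def, le_div_iff₀ hm0]
    rcases le_or_gt ⌊q*m⌋₊ (m-1) with h | h
    · have hje : j = ⌊q*m⌋₊ := min_eq_left h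
      have hlt := Nat.lt_floor_add_one (q*m)
      rw [hje]
      push_cast
      linarith
    · have hje : j = m - 1 := min_eq_right h.le
      have hc : (j:ℝ) + 1 = m := by
        rw [hje]
        push_cast [Nat.cast_sub hm]
        ring
      rw [hc]
      nlinarith [hq1, hm0]
  have hx11 : x1 ≤ 1 := by
    rw [hx1def, div_le_one hm0]
    have : ((j:ℝ) + 1) ≤ m := by exact_mod_cast hjm
    linarith
  have hx00 : (0:ℝ) ≤ x0 := by rw [hx0def]; positivity
  have hd : x1 - x0 = 1 / m := by
    rw [hx0def, hx1def]
    field_simp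
    ring
  have h1mpos : (0:ℝ) < 1 / m := by positivity
  have hx01 : x0 < x1 := by linarith
  have hx0mem : x0 ∈ Set.Icc (0:ℝ) 1 := ⟨hx00, by linarith⟩
  have hx1mem : x1 ∈ Set.Icc (0:ℝ) 1 := ⟨by linarith, hx11⟩
  have ha : 0 ≤ q - x0 := by linarith
  have hb : 0 ≤ x1 - q := by linarith
  -- Lipschitz instances
  have habsA : |S q 0 - S x0 0| ≤ L * (q - x0) := by
    have h := hlip q hqmem x0 hx0mem 0
    rwa [abs_of_nonneg ha] at h
  have habsB : |S x1 0 - S q 0| ≤ L * (x1 - q) := by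
    have h := hlip x1 hx1mem q hqmem 0
    rwa [abs_of_nonneg hb] at h
  have habsA1 : |S q 1 - S x1 1| ≤ L * (x1 - q) := by
    have h := hlip q hqmem x1 hx1mem 1
    rwa [abs_sub_comm q x1, abs_of_nonneg hb] at h
  have habsB1 : |S x0 1 - S q 1| ≤ L * (q - x0) := by
    have h := hlip x0 hx0mem q hqmem 1
    rwa [abs_sub_comm x0 q, abs_of_nonneg ha] at h
  -- monotonicity instances
  have hsgnA : 0 ≤ (q - x0) * (S q 0 - S x0 0) := mono0 x0 hx0mem q hqmem
  have hsgnB : 0 ≤ (x1 - q) * (S x1 0 - S q 0) := mono0 q hqmem x1 hx1mem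
  have hsgnA1 : 0 ≤ (x1 - q) * (S q 1 - S x1 1) := mono1 q hqmem x1 hx1mem
  have hsgnB1 : 0 ≤ (q - x0) * (S x0 1 - S q 1) := mono1 x0 hx0mem q hqmem
  -- propriety instances
  have hP0raw := prop x0 hx0mem q hqmem
  have hP1raw := prop x1 hx1mem q hqmem
  clear_value x0 x1
  -- bound conversion
  have habm : 4 * ((q - x0) * (x1 - q)) * (m:ℝ)^2 ≤ 1 := by
    have hsum : (q - x0) + (x1 - q) = 1 / m := by linarith
    have h2 : (m:ℝ) * ((q - x0) + (x1 - q)) = 1 := by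
      rw [hsum]; field_simp
    nlinarith [sq_nonneg ((m:ℝ) * ((q - x0) - (x1 - q))), h2, sq_nonneg ((m:ℝ) * ((q-x0)+(x1-q)))]
  have hfinal : ∀ t : ℝ, t ≤ 8 * L * ((q - x0) * (x1 - q)) → t ≤ 2 * L / (m:ℝ)^2 := by
    intro t ht
    have hstep : 8 * L * ((q - x0) * (x1 - q)) ≤ 2 * L / (m:ℝ)^2 := by
      rw [le_div_iff₀ (by positivity : (0:ℝ) < (m:ℝ)^2)]
      have hh := mul_le_mul_of_nonneg_left habm hL
      linarith only [hh]
    linarith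
  by_cases hm4 : m ≤ 4
  · -- point mass at nearest grid point
    have hmr : (m:ℝ) ≤ 4 := by exact_mod_cast hm4
    rcases le_or_gt (q - x0) (x1 - q) with hnear | hnear
    · refine build_w S L q m j hm hjm 1 zero_le_one (le_refl 1) ?_
      intro y
      have h := hlip x0 hx0mem q hqmem y
      rw [abs_sub_comm x0 q, abs_of_nonneg ha] at h
      have h1 : S x0 y - S q y ≤ L * (q - x0) := le_trans (le_abs_self _) h
      have h2a : 2 * (q - x0) ≤ 1 / (m:ℝ) := by linarith
      have h2b : (m:ℝ) * (2 * (q - x0)) ≤ 1 := by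
        have hmul := mul_le_mul_of_nonneg_left h2a hm0.le
        have heq : (m:ℝ) * (1 / m) = 1 := by field_simp
        linarith
      have h3 : L * (q - x0) ≤ 2 * L / (m:ℝ)^2 := by
        rw [le_div_iff₀ (by positivity : (0:ℝ) < (m:ℝ)^2)]
        have hi1 := mul_le_mul_of_nonneg_left h2b (mul_nonneg hL hm0.le)
        have hi2 := mul_le_mul_of_nonneg_left hmr hL
        linarith only [hi1, hi2]
      rw [← hx0def, ← hx1def]
      linarith
    · refine build_w S L q m j hm hjm 0 (le_refl 0) zero_le_one ?_
      intro y
      have h := hlip x1 hx1mem q hqmem y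
      rw [abs_of_nonneg hb] at h
      have h1 : S x1 y - S q y ≤ L * (x1 - q) := le_trans (le_abs_self _) h
      have h2a : 2 * (x1 - q) ≤ 1 / (m:ℝ) := by linarith
      have h2b : (m:ℝ) * (2 * (x1 - q)) ≤ 1 := by
        have hmul := mul_le_mul_of_nonneg_left h2a hm0.le
        have heq : (m:ℝ) * (1 / m) = 1 := by field_simp
        linarith
      have h3 : L * (x1 - q) ≤ 2 * L / (m:ℝ)^2 := by
        rw [le_div_iff₀ (by positivity : (0:ℝ) < (m:ℝ)^2)]
        have hi1 := mul_le_mul_of_nonneg_left h2b (mul_nonneg hL hm0.le)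
        have hi2 := mul_le_mul_of_nonneg_left hmr hL
        linarith only [hi1, hi2]
      rw [← hx0def, ← hx1def]
      linarith
  · -- m ≥ 5
    have hm5 : 5 ≤ m := by omega
    have hm5R : (5:ℝ) ≤ m := by exact_mod_cast hm5
    have h1m : 1 / (m:ℝ) ≤ 1 / 5 := by
      rw [div_le_div_iff₀ hm0 (by norm_num)]
      linarith
    by_cases hhalf : 1/2 ≤ x1
    · -- use f-matching branch
      have hx0ge : (3:ℝ)/10 ≤ x0 := by linarith
      have h18 : 1/8 ≤ x0 * x1 := by
        have hmul := mul_nonneg (by linarith : (0:ℝ) ≤ x1 - 1/2)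
          (by linarith : (0:ℝ) ≤ x0 - 3/10)
        linarith only [hmul, hhalf, hx0ge]
      have hP0 : x0 * (S x0 1 - S q 1) ≤ (1 - x0) * (S q 0 - S x0 0) := by linarith
      have hP1 : x1 * (S x1 1 - S q 1) ≤ (1 - x1) * (S q 0 - S x1 0) := by linarith
      obtain ⟨lam, hl0, hl1, hc0, hc1⟩ := core_ineq L x0 x1 q
        (S x0 0) (S x1 0) (S q 0) (S x0 1) (S x1 1) (S q 1)
        hx00 hx01 hx11 hx0q hqx1 h18 hL habsA habsB hsgnA hsgnB hP0 hP1
      refine build_w S L q m j hm hjm lam hl0 hl1 ?_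
      intro y
      rw [← hx0def, ← hx1def]
      have hb0 := hfinal _ hc0
      have hb1 := hfinal _ hc1
      fin_cases y
      · exact hb0
      · exact hb1
    · -- mirror branch
      push_neg at hhalf
      have hy1 : (1:ℝ)/2 ≤ 1 - x1 := by linarith
      have hy0 : (1:ℝ)/2 ≤ 1 - x0 := by linarith
      have h18' : 1/8 ≤ (1 - x1) * (1 - x0) := by
        have hmul := mul_nonneg (by linarith : (0:ℝ) ≤ (1 - x1) - 1/2)
          (by linarith : (0:ℝ) ≤ (1 - x0) - 1/2)
        linarith only [hmul, hy1, hy0]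
      obtain ⟨lam', hl0, hl1, hc0, hc1⟩ := core_ineq L (1 - x1) (1 - x0) (1 - q)
        (S x1 1) (S x0 1) (S q 1) (S x1 0) (S x0 0) (S q 0)
        (by linarith) (by linarith) (by linarith) (by linarith) (by linarith)
        h18' hL
        (by { have heq : L * (1 - q - (1 - x1)) = L * (x1 - q) := by ring
              rw [heq]; exact habsA1 })
        (by { have heq : L * (1 - x0 - (1 - q)) = L * (q - x0) := by ring
              rw [heq]; exact habsB1 })
        (by linarith only [hsgnA1])
        (by linarith only [hsgnB1])
        (by linarith only [hP1raw])
        (by linarith only [hP0raw])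
      have hy2 : ∀ y : Fin 2, lam' * (S x1 y - S q y) + (1 - lam') * (S x0 y - S q y)
          ≤ 8 * L * ((1 - q - (1 - x1)) * (1 - x0 - (1 - q))) := by
        intro y
        fin_cases y
        · exact hc1
        · exact hc0
      refine build_w S L q m j hm hjm (1 - lam') (by linarith) (by linarith) ?_
      intro y
      rw [← hx0def, ← hx1def]
      exact hfinal _ (by linarith only [hy2 y])
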